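/- For every n ≥ 1 and all p, a ∈ V_n, the symplectic transvection t_p satisfies t_p(C_a) = C_{t_p(a)} and t_p(H_a) = H_{a + (1 + Q_a(p))·p}, where images are taken pointwise. -/
import Mathlib


/-- The symplectic vector space `V_n = (ZMod 2)^(2n)` of the n-qubit real Pauli group. -/
abbrev V (n : ℕ) : Type := Fin (2 * n) → ZMod 2

/-- The index `2i-1` (0-based: `2i`). -/
def i0 {n : ℕ} (i : Fin n) : Fin (2 * n) := ⟨2 * i.1, by have := i.isLt; omega⟩

/-- The index `2i` (0-based: `2i+1`). -/
def i1 {n : ℕ} (i : Fin n) : Fin (2 * n) := ⟨2 * i.1 + 1, by have := i.isLt; omega⟩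

/-- The symplectic form `⟨x,y⟩ = Σ_{i=1}^n (x_{2i−1} y_{2i} + x_{2i} y_{2i−1})`. -/
def sform {n : ℕ} (x y : V n) : ZMod 2 :=
  ∑ i : Fin n, (x (i0 i) * y (i1 i) + x (i1 i) * y (i0 i))

/-- The point set `P = V_n \ {0}` of the incidence geometry `G_n`. -/
def P (n : ℕ) : Set (V n) := {x | x ≠ 0}

/-- The line set `L = {{a,b,a+b} : a,b ∈ P, a ≠ b, ⟨a,b⟩ = 0}` of `G_n`. -/
def Lines (n : ℕ) : Set (Set (V n)) :=
  {l | ∃ a b : V n, a ∈ P n ∧ b ∈ P n ∧ a ≠ b ∧ sform a b = 0 ∧ l = {a, b, a + b}}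

/-- A subset `H ⊆ P` satisfies condition (H1) if every line meets it in exactly
one point or is contained in it. -/
def IsH1 {n : ℕ} (H : Set (V n)) : Prop :=
  H ⊆ P n ∧ ∀ l ∈ Lines n, (H ∩ l).ncard = 1 ∨ l ⊆ H

/-- A geometric hyperplane: a subset satisfying (H1) which is not the full point set. -/
def IsHyperplane {n : ℕ} (H : Set (V n)) : Prop := IsH1 H ∧ H ≠ P n

/-- `A ⊞ B`: the complement in `P` of the symmetric difference of `A` and `B`. -/
def boxAdd {n : ℕ} (A B : Set (V n)) : Set (V n) := P n \ (symmDiff A B)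

/-- The quadratic form `Q_0(x) = Σ_{i=1}^n x_{2i−1} x_{2i}`. -/
def Q0 {n : ℕ} (x : V n) : ZMod 2 := ∑ i : Fin n, x (i0 i) * x (i1 i)

/-- The quadratic form `Q_p(x) = Q_0(x) + ⟨p,x⟩`. -/
def Qf {n : ℕ} (p x : V n) : ZMod 2 := Q0 x + sform p x

/-- The perp-set hyperplane `C_p = {x ∈ P : ⟨p,x⟩ = 0}`. -/
def Cset {n : ℕ} (p : V n) : Set (V n) := {x ∈ P n | sform p x = 0}

/-- The quadric hyperplane `H_p = {x ∈ P : Q_p(x) = 0}`. -/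
def Hset {n : ℕ} (p : V n) : Set (V n) := {x ∈ P n | Qf p x = 0}

/-- The symplectic transvection `t_p : x ↦ x + ⟨p,x⟩·p`. -/
def tv {n : ℕ} (p : V n) (x : V n) : V n := x + sform p x • p


section Aux
variable {n : ℕ}

lemma sform_comm (x y : V n) : sform x y = sform y x :=
  Finset.sum_congr rfl fun i _ => by ring

lemma sform_add_right (u x y : V n) : sform u (x + y) = sform u x + sform u y := by
  unfold sform
  rw [← Finset.sum_add_distrib]
  exact Finset.sum_congr rfl fun i _ => by simp [Pi.add_apply]; ring

lemma sform_add_left (x y u : V n) : sform (x + y) u = sform x u + sform y u := by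
  rw [sform_comm, sform_add_right, sform_comm u x, sform_comm u y]

lemma sform_smul_right (u : V n) (α : ZMod 2) (y : V n) :
    sform u (α • y) = α * sform u y := by
  unfold sform
  rw [Finset.mul_sum]
  exact Finset.sum_congr rfl fun i _ => by simp [Pi.smul_apply, smul_eq_mul]; ring

lemma sform_smul_left (α : ZMod 2) (x u : V n) :
    sform (α • x) u = α * sform x u := by
  rw [sform_comm, sform_smul_right, sform_comm]

lemma sform_self (x : V n) : sform x x = 0 := by
  unfold sform
  refine Finset.sum_eq_zero fun i _ => ?_
  generalize x (i0 i) = A; generalize x (i1 i) = B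
  revert A B; decide

lemma sform_zero_right (u : V n) : sform u 0 = 0 := by
  simp [sform]

lemma Q0_add (x y : V n) : Q0 (x + y) = Q0 x + Q0 y + sform x y := by
  unfold Q0 sform
  rw [← Finset.sum_add_distrib, ← Finset.sum_add_distrib]
  exact Finset.sum_congr rfl fun i _ => by simp [Pi.add_apply]; ring

lemma Q0_smul (α : ZMod 2) (p : V n) : Q0 (α • p) = α * Q0 p := by
  unfold Q0
  rw [Finset.mul_sum]
  refine Finset.sum_congr rfl fun i _ => ?_
  simp only [Pi.smul_apply, smul_eq_mul]
  generalize p (i0 i) = A; generalize p (i1 i) = B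
  revert A B α; decide

lemma tv_tv (p x : V n) : tv p (tv p x) = x := by
  unfold tv
  rw [sform_add_right, sform_smul_right, sform_self, mul_zero, add_zero,
      add_assoc, ← add_smul]
  have : sform p x + sform p x = 0 := by generalize sform p x = A; revert A; decide
  rw [this, zero_smul, add_zero]

lemma tv_zero (p : V n) : tv p (0 : V n) = 0 := by
  simp [tv, sform_zero_right]

lemma tv_ne_zero_iff (p x : V n) : tv p x ≠ 0 ↔ x ≠ 0 := by
  constructor
  · intro h hx; exact h (hx ▸ tv_zero p)
  · intro h h0
    apply h
    have := congrArg (tv p) h0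
    rwa [tv_tv, tv_zero] at this

lemma sform_tv (p a x : V n) : sform (tv p a) (tv p x) = sform a x := by
  unfold tv
  rw [sform_add_left, sform_smul_left, sform_add_right, sform_add_right,
      sform_smul_right, sform_smul_right, sform_self, mul_zero, add_zero,
      sform_comm p a]
  generalize sform a x = A
  generalize sform p x = B
  generalize sform a p = C
  revert A B C; decide

lemma Qf_tv (p a x : V n) : Qf (a + (1 + Qf a p) • p) (tv p x) = Qf a x := by
  unfold Qf tv
  rw [Q0_add, Q0_smul, sform_add_left, sform_smul_left, sform_add_right,
      sform_add_right, sform_smul_right, sform_smul_right, sform_smul_right,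
      sform_self, mul_zero, add_zero, sform_comm x p]
  generalize Q0 x = A
  generalize Q0 p = B
  generalize sform p x = C
  generalize sform a x = D
  generalize sform a p = E
  revert A B C D E; decide

lemma mem_image_tv (p : V n) (S : Set (V n)) (y : V n) :
    y ∈ tv p '' S ↔ tv p y ∈ S := by
  constructor
  · rintro ⟨x, hx, rfl⟩; rwa [tv_tv]
  · intro h; exact ⟨tv p y, h, tv_tv p y⟩

end Aux

theorem stmt13 (n : ℕ) (hn : 1 ≤ n) (p a : V n) :
    tv p '' Cset a = Cset (tv p a) ∧
    tv p '' Hset a = Hset (a + (1 + Qf a p) • p) := by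
  constructor
  · ext y
    rw [mem_image_tv]
    simp only [Cset, Set.mem_setOf_eq, P, Set.mem_sep_iff]
    rw [← sform_tv p a (tv p y), tv_tv]
    constructor
    · rintro ⟨h1, h2⟩; exact ⟨(tv_ne_zero_iff p y).mp h1, h2⟩
    · rintro ⟨h1, h2⟩; exact ⟨(tv_ne_zero_iff p y).mpr h1, h2⟩
  · ext y
    rw [mem_image_tv]
    simp only [Hset, Set.mem_setOf_eq, P, Set.mem_sep_iff]
    rw [← Qf_tv p a (tv p y), tv_tv]
    constructor
    · rintro ⟨h1, h2⟩; exact ⟨(tv_ne_zero_iff p y).mp h1, h2⟩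
    · rintro ⟨h1, h2⟩; exact ⟨(tv_ne_zero_iff p y).mpr h1, h2⟩
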